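/- Let R be a ring with identity and suppose there exist pairwise orthogonal idempotents e₁,…,eₙ summing to 1 such that eᵢReⱼ · eⱼReᵢ = 0 whenever i ≠ j (e.g., arising from an n-Peirce ring structure). Then the additive subgroup D = Σ_{i≠j} eᵢReⱼ is an ideal of R that is nilpotent of nilpotency index at most n. -/

import Mathlib

open Pointwise

section OffDiagAux

variable {R : Type*} [Ring R] {n : ℕ}

/-- Chain of generator elements: starting at index `i`, each pair `(j, r)` contributes
the element `e i * r * e j` and moves the current index to `j`. -/
def odElems (e : Fin n → R) : Fin n → List (Fin n × R) → List R
  | _, [] => []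
  | i, p :: L => (e i * p.2 * e p.1) :: odElems e p.1 L

/-- A chain is good if consecutive indices are distinct. -/
def odGood : Fin n → List (Fin n × R) → Prop
  | _, [] => True
  | i, p :: L => i ≠ p.1 ∧ odGood p.1 L

/-- The final index of a chain. -/
def odLast : Fin n → List (Fin n × R) → Fin n
  | i, [] => i
  | _, p :: L => odLast p.1 L

@[simp] lemma odElems_nil (e : Fin n → R) (i : Fin n) : odElems e i [] = [] := rfl

@[simp] lemma odElems_cons (e : Fin n → R) (i j : Fin n) (r : R) (L : List (Fin n × R)) :
    odElems e i ((j, r) :: L) = (e i * r * e j) :: odElems e j L := rfl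

@[simp] lemma odLast_nil (i : Fin n) : odLast (R := R) i [] = i := rfl

@[simp] lemma odLast_cons (i j : Fin n) (r : R) (L : List (Fin n × R)) :
    odLast i ((j, r) :: L) = odLast j L := rfl

lemma odElems_append (e : Fin n → R) :
    ∀ (A B : List (Fin n × R)) (i : Fin n),
      odElems e i (A ++ B) = odElems e i A ++ odElems e (odLast i A) B := by
  intro A
  induction A with
  | nil => intro B i; simp
  | cons p A ih =>
    obtain ⟨j, r⟩ := p
    intro B i
    simp [ih]

lemma odLast_append_single :
    ∀ (A : List (Fin n × R)) (i j : Fin n) (r : R),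
      odLast (R := R) i (A ++ [(j, r)]) = j := by
  intro A
  induction A with
  | nil => intro i j r; simp
  | cons p A ih =>
    obtain ⟨k, s⟩ := p
    intro i j r
    simp [ih]

lemma odSandwich (e : Fin n → R) (hee : ∀ i, e i * e i = e i) :
    ∀ (A : List (Fin n × R)) (i j : Fin n) (r : R),
      ∃ X, (odElems e i (A ++ [(j, r)])).prod = e i * X * e j := by
  intro A
  induction A with
  | nil => intro i j r; exact ⟨r, by simp⟩
  | cons p A ih =>
    obtain ⟨k, s⟩ := p
    intro i j r
    obtain ⟨X, hX⟩ := ih k j r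
    refine ⟨s * e k * X, ?_⟩
    rw [List.cons_append, odElems_cons, List.prod_cons, hX]
    simp only [mul_assoc]
    rw [← mul_assoc (e k) (e k), hee k]

lemma odKill (e : Fin n → R) (hee : ∀ i, e i * e i = e i)
    (hzero : ∀ i j, i ≠ j → ∀ x y : R, (e i * x * e j) * (e j * y * e i) = 0)
    (A B : List (Fin n × R)) (i j : Fin n) (r s : R) (hij : i ≠ j) :
    (odElems e i ((j, r) :: (A ++ (i, s) :: B))).prod = 0 := by
  have h1 : A ++ (i, s) :: B = (A ++ [(i, s)]) ++ B := by simp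
  obtain ⟨X, hX⟩ := odSandwich e hee A j i s
  rw [odElems_cons, h1, odElems_append, odLast_append_single]
  simp only [List.prod_cons, List.prod_append, hX]
  rw [← mul_assoc, hzero i j hij r X, zero_mul]

lemma odNodupKill (e : Fin n → R) (hee : ∀ i, e i * e i = e i)
    (hzero : ∀ i j, i ≠ j → ∀ x y : R, (e i * x * e j) * (e j * y * e i) = 0) :
    ∀ (L : List (Fin n × R)) (i : Fin n), odGood i L →
      ¬ (i :: L.map Prod.fst).Nodup → (odElems e i L).prod = 0 := by
  intro L
  induction L with
  | nil => intro i _ h; exact absurd (by simp) h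
  | cons p L ih =>
    obtain ⟨j, r⟩ := p
    intro i hg hnd
    obtain ⟨hij, hg'⟩ := hg
    by_cases hi : i ∈ L.map Prod.fst
    · obtain ⟨q, hq, hq1⟩ := List.mem_map.mp hi
      obtain ⟨q1, q2⟩ := q
      have hq1' : q1 = i := hq1
      subst hq1'
      obtain ⟨A, B, hAB⟩ := List.append_of_mem hq
      rw [hAB]
      exact odKill e hee hzero A B q1 j r q2 hij
    · have hnd' : ¬ (j :: L.map Prod.fst).Nodup := by
        intro h
        apply hnd
        refine List.nodup_cons.mpr ⟨?_, h⟩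
        simp only [List.map_cons, List.mem_cons]
        rintro (h1 | h2)
        · exact hij h1
        · exact hi h2
      rw [odElems_cons, List.prod_cons, ih j hg' hnd', mul_zero]

lemma odChainZero (e : Fin n → R) (hee : ∀ i, e i * e i = e i)
    (hzero : ∀ i j, i ≠ j → ∀ x y : R, (e i * x * e j) * (e j * y * e i) = 0)
    (L : List (Fin n × R)) (i : Fin n) (hg : odGood i L) (hn : n ≤ L.length) :
    (odElems e i L).prod = 0 := by
  apply odNodupKill e hee hzero L i hg
  intro h
  have := h.length_le_card
  simp only [List.length_cons, List.length_map, Fintype.card_fin] at this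
  omega

lemma odStep (e : Fin n → R) (heo : ∀ i j, i ≠ j → e i * e j = 0) (hnpos : 0 < n) :
    ∀ l : List R,
      (∀ x ∈ l, x ∈ {x : R | ∃ i j, ∃ r : R, i ≠ j ∧ x = e i * r * e j}) →
      l.prod = 0 ∨
        ∃ (i : Fin n) (L : List (Fin n × R)),
          odGood i L ∧ L.length = l.length ∧ l.prod = (odElems e i L).prod := by
  intro l
  induction l with
  | nil =>
    intro _
    exact Or.inr ⟨⟨0, hnpos⟩, [], trivial, rfl, by simp⟩
  | cons x l ih =>
    intro h
    obtain ⟨i, j, r, hij, hx⟩ := h x List.mem_cons_self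
    rcases ih (fun y hy => h y (List.mem_cons_of_mem x hy)) with h0 | ⟨i', L, hg, hlen, hprod⟩
    · left; rw [List.prod_cons, h0, mul_zero]
    · cases L with
      | nil =>
        have hl : l = [] := List.length_eq_zero_iff.mp hlen.symm
        subst hl
        exact Or.inr ⟨i, [(j, r)], ⟨hij, trivial⟩, rfl, by simp [hx]⟩
      | cons q L' =>
        obtain ⟨k, s⟩ := q
        by_cases hji : j = i'
        · subst hji
          refine Or.inr ⟨i, (j, r) :: (k, s) :: L', ⟨hij, hg⟩, by simp [hlen], ?_⟩
          rw [odElems_cons, List.prod_cons, List.prod_cons, hx, hprod]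
        · left
          rw [List.prod_cons, hprod, hx, odElems_cons, List.prod_cons]
          simp only [mul_assoc]
          rw [← mul_assoc (e j) (e i'), heo j i' hji]
          simp

lemma odAnyList (e : Fin n → R) (hee : ∀ i, e i * e i = e i)
    (heo : ∀ i j, i ≠ j → e i * e j = 0)
    (hzero : ∀ i j, i ≠ j → ∀ x y : R, (e i * x * e j) * (e j * y * e i) = 0)
    (hnpos : 0 < n) (l : List R)
    (hS : ∀ x ∈ l, x ∈ {x : R | ∃ i j, ∃ r : R, i ≠ j ∧ x = e i * r * e j})
    (hlen : n ≤ l.length) : l.prod = 0 := by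
  rcases odStep e heo hnpos l hS with h0 | ⟨i, L, hg, hlenL, hprod⟩
  · exact h0
  · rw [hprod]
    exact odChainZero e hee hzero L i hg (by omega)

lemma odMulMemClosureMul {A B : Set R} {x y : R}
    (hx : x ∈ AddSubgroup.closure A) (hy : y ∈ AddSubgroup.closure B) :
    x * y ∈ AddSubgroup.closure (A * B) := by
  refine AddSubgroup.closure_induction
    (p := fun x _ => ∀ y ∈ AddSubgroup.closure B, x * y ∈ AddSubgroup.closure (A * B))
    ?_ ?_ ?_ ?_ hx y hy
  · intro a ha y hy
    refine AddSubgroup.closure_induction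
      (p := fun y _ => a * y ∈ AddSubgroup.closure (A * B)) ?_ ?_ ?_ ?_ hy
    · intro b hb
      exact AddSubgroup.subset_closure (Set.mul_mem_mul ha hb)
    · show a * 0 ∈ AddSubgroup.closure (A * B)
      rw [mul_zero]; exact zero_mem _
    · intro u v _ _ hu hv; rw [mul_add]; exact add_mem hu hv
    · intro u _ hu; rw [mul_neg]; exact neg_mem hu
  · intro y hy; rw [zero_mul]; exact zero_mem _
  · intro u v _ _ hu hv y hy; rw [add_mul]; exact add_mem (hu y hy) (hv y hy)
  · intro u _ hu y hy; rw [neg_mul]; exact neg_mem (hu y hy)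

/-- Products of `m` generators. -/
def odSprod (S : Set R) (m : ℕ) : Set R :=
  {x | ∃ l : List R, l.length = m ∧ (∀ y ∈ l, y ∈ S) ∧ x = l.prod}

lemma odListProd (S : Set R) :
    ∀ l : List R, (∀ x ∈ l, x ∈ AddSubgroup.closure S) →
      l.prod ∈ AddSubgroup.closure (odSprod S l.length) := by
  intro l
  induction l with
  | nil =>
    intro _
    exact AddSubgroup.subset_closure ⟨[], rfl, by simp, by simp⟩
  | cons x l ih =>
    intro h
    have h1 : x * l.prod ∈ AddSubgroup.closure (S * odSprod S l.length) :=
      odMulMemClosureMul (h x List.mem_cons_self)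
        (ih fun y hy => h y (List.mem_cons_of_mem x hy))
    rw [List.prod_cons]
    refine AddSubgroup.closure_mono ?_ h1
    rintro z ⟨a, ha, b, ⟨m, hm, hmS, rfl⟩, rfl⟩
    refine ⟨a :: m, by simp [hm], ?_, by simp⟩
    intro y hy
    rcases List.mem_cons.mp hy with rfl | hy
    · exact ha
    · exact hmS y hy

end OffDiagAux

/-- If `e₁,…,eₙ` are pairwise orthogonal idempotents summing to
`1` with `eᵢReⱼ ⋅ eⱼReᵢ = 0` for `i ≠ j`, then the additive subgroup
`D = Σ_{i≠j} eᵢReⱼ` is a two-sided ideal of `R` which is nilpotent of index at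
most `n` (every product of `n` elements of `D` vanishes). -/
theorem offdiagonal_ideal_nilpotent {R : Type*} [Ring R] {n : ℕ}
    (e : Fin n → R)
    (hee : ∀ i, e i * e i = e i)
    (heo : ∀ i j, i ≠ j → e i * e j = 0)
    (hes : ∑ i, e i = 1)
    (hzero : ∀ i j, i ≠ j → ∀ x y : R, (e i * x * e j) * (e j * y * e i) = 0) :
    (∀ x ∈ AddSubgroup.closure {x : R | ∃ i j, ∃ r : R, i ≠ j ∧ x = e i * r * e j},
      ∀ a : R,
      a * x ∈ AddSubgroup.closure {x : R | ∃ i j, ∃ r : R, i ≠ j ∧ x = e i * r * e j} ∧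
      x * a ∈ AddSubgroup.closure {x : R | ∃ i j, ∃ r : R, i ≠ j ∧ x = e i * r * e j}) ∧
    (∀ l : List R, l.length = n →
      (∀ x ∈ l, x ∈ AddSubgroup.closure {x : R | ∃ i j, ∃ r : R, i ≠ j ∧ x = e i * r * e j}) →
      l.prod = 0) := by
  set S : Set R := {x : R | ∃ i j, ∃ r : R, i ≠ j ∧ x = e i * r * e j} with hSdef
  set D := AddSubgroup.closure S with hDdef
  constructor
  · -- ideal property
    intro x hx
    refine AddSubgroup.closure_induction
      (p := fun x _ => ∀ a : R, a * x ∈ D ∧ x * a ∈ D) ?_ ?_ ?_ ?_ hx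
    · rintro z ⟨i, j, r, hij, rfl⟩ a
      constructor
      · have key : a * (e i * r * e j) = ∑ k, e k * (a * (e i * r * e j)) := by
          rw [← Finset.sum_mul, hes, one_mul]
        rw [key]
        refine AddSubgroup.sum_mem _ (fun k _ => ?_)
        by_cases hkj : k = j
        · subst hkj
          have hz : e k * (a * (e i * r * e k)) = (e k * a * e i) * (e i * r * e k) := by
            simp only [mul_assoc]
            rw [← mul_assoc (e i) (e i), hee i]
          rw [hz, hzero k i (fun h => hij h.symm) a r]
          exact zero_mem _
        · exact AddSubgroup.subset_closure
            ⟨k, j, a * e i * r, hkj, by simp [mul_assoc]⟩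
      · have key : (e i * r * e j) * a = ∑ k, (e i * r * e j) * a * e k := by
          rw [← Finset.mul_sum, hes, mul_one]
        rw [key]
        refine AddSubgroup.sum_mem _ (fun k _ => ?_)
        by_cases hki : k = i
        · subst hki
          have hz : (e k * r * e j) * a * e k = (e k * r * e j) * (e j * a * e k) := by
            simp only [mul_assoc]
            rw [← mul_assoc (e j) (e j), hee j]
          rw [hz, hzero k j hij r a]
          exact zero_mem _
        · exact AddSubgroup.subset_closure
            ⟨i, k, r * e j * a, fun h => hki h.symm, by simp [mul_assoc]⟩
    · intro a
      rw [mul_zero, zero_mul]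
      exact ⟨zero_mem _, zero_mem _⟩
    · intro u v _ _ hu hv a
      rw [mul_add, add_mul]
      exact ⟨add_mem (hu a).1 (hv a).1, add_mem (hu a).2 (hv a).2⟩
    · intro u _ hu a
      rw [mul_neg, neg_mul]
      exact ⟨neg_mem (hu a).1, neg_mem (hu a).2⟩
  · -- nilpotency
    intro l hlen hmem
    rcases Nat.eq_zero_or_pos n with hn0 | hnpos
    · have h01 : (0 : R) = 1 := by
        rw [← hes]
        subst hn0
        simp
      have : Subsingleton R := subsingleton_of_zero_eq_one h01
      exact Subsingleton.elim _ _
    · have h1 : l.prod ∈ AddSubgroup.closure (odSprod S l.length) := odListProd S l hmem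
      have h2 : odSprod S l.length ⊆ {(0 : R)} := by
        rintro z ⟨m, hm, hmS, rfl⟩
        have : m.prod = 0 :=
          odAnyList e hee heo hzero hnpos m hmS (by omega)
        simp [this]
      have h3 : AddSubgroup.closure (odSprod S l.length) ≤ ⊥ := by
        rw [AddSubgroup.closure_le]
        intro z hz
        simp [h2 hz]
      simpa using h3 h1
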